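/- For every braid β ∈ B_n, writing SGE(β) = (M, π), every entry of M − Mᵀ above the diagonal lies in {0, 1}: for all i < j, (M − Mᵀ)[i, j] ∈ {0, 1}. -/

import Mathlib

/-- The braid relations. -/
def braidRels (n : ℕ) : Set (FreeGroup (Fin (n - 1))) :=
  {r | (∃ i j : Fin (n - 1), (j : ℕ) = (i : ℕ) + 1 ∧
        r = .of i * .of j * .of i * (.of j * .of i * .of j)⁻¹) ∨
       (∃ i j : Fin (n - 1), (i : ℕ) + 2 ≤ (j : ℕ) ∧
        r = .of i * .of j * (.of j * .of i)⁻¹)}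

/-- The braid group `B_n`. -/
abbrev BraidGroup (n : ℕ) := PresentedGroup (braidRels n)

/-- The Artin generator `σ_{k+1}` (0-based index `k`). -/
def braidGen {n : ℕ} (i : Fin (n - 1)) : BraidGroup n := PresentedGroup.of i

/-- The strand index `k`, viewed inside `Fin n`. -/
def lo {n : ℕ} (k : Fin (n - 1)) : Fin n := ⟨k, by have := k.isLt; omega⟩

/-- The strand index `k + 1`, viewed inside `Fin n`. -/
def hi {n : ℕ} (k : Fin (n - 1)) : Fin n := ⟨(k : ℕ) + 1, by have := k.isLt; omega⟩

/-- The action of `S_n` on `n × n` integer matrices, simultaneously permuting rows and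
columns: `(π·M)[i,j] = M[π⁻¹ i, π⁻¹ j]`. -/
def matPermAct (n : ℕ) :
    Equiv.Perm (Fin n) →* MulAut (Multiplicative (Matrix (Fin n) (Fin n) ℤ)) where
  toFun π :=
    { toFun := fun M => Multiplicative.ofAdd fun i j => Multiplicative.toAdd M (π⁻¹ i) (π⁻¹ j)
      invFun := fun M => Multiplicative.ofAdd fun i j => Multiplicative.toAdd M (π i) (π j)
      left_inv := fun M => by
        funext i j
        exact congrArg₂ (Multiplicative.toAdd M) (π.symm_apply_apply i) (π.symm_apply_apply j)
      right_inv := fun M => by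
        funext i j
        exact congrArg₂ (Multiplicative.toAdd M) (π.apply_symm_apply i) (π.apply_symm_apply j)
      map_mul' := fun M M' => rfl }
  map_one' := by ext M; simp
  map_mul' := fun π ρ => by
    ext M
    rfl

/-- The semidirect product `Mat_n(ℤ) ⋊ S_n`. -/
abbrev SGEGroup (n : ℕ) :=
  SemidirectProduct (Multiplicative (Matrix (Fin n) (Fin n) ℤ)) (Equiv.Perm (Fin n))
    (matPermAct n)

/-- The value `(O_{k,k+1}, (k, k+1))` of the super-Gauss-Epple homomorphism on the
generator `σ_k`, where `O_{i,j}` is the matrix with a single `1` entry at `(i,j)`. -/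
def sgeGen {n : ℕ} (k : Fin (n - 1)) : SGEGroup n :=
  ⟨Multiplicative.ofAdd (Matrix.single (lo k) (hi k) 1), Equiv.swap (lo k) (hi k)⟩

/-- The inversion matrix of a permutation. -/
def invMat {n : ℕ} (π : Equiv.Perm (Fin n)) : Matrix (Fin n) (Fin n) ℤ :=
  Matrix.of fun i j =>
    if i < j ∧ π⁻¹ j < π⁻¹ i then 1 else if j < i ∧ π⁻¹ i < π⁻¹ j then -1 else 0

lemma invMat_one {n : ℕ} (i j : Fin n) : invMat (1 : Equiv.Perm (Fin n)) i j = 0 := by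
  simp only [invMat, Matrix.of_apply, inv_one, Equiv.Perm.one_apply, Fin.lt_def]
  split_ifs <;> omega

lemma invMat_mul {n : ℕ} (π ρ : Equiv.Perm (Fin n)) (i j : Fin n) :
    invMat (π * ρ) i j = invMat π i j + invMat ρ (π⁻¹ i) (π⁻¹ j) := by
  have e1 : (i = j) ↔ (π⁻¹ i = π⁻¹ j) := (Equiv.injective _).eq_iff.symm
  have e2 : (π⁻¹ i = π⁻¹ j) ↔ (ρ⁻¹ (π⁻¹ i) = ρ⁻¹ (π⁻¹ j)) := (Equiv.injective _).eq_iff.symm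
  simp only [invMat, Matrix.of_apply, mul_inv_rev, Equiv.Perm.mul_apply]
  simp only [Fin.lt_def, Fin.ext_iff] at *
  split_ifs <;> omega

lemma invMat_inv {n : ℕ} (π : Equiv.Perm (Fin n)) (i j : Fin n) :
    invMat π⁻¹ i j = invMat π (π j) (π i) := by
  have e1 : (i = j) ↔ (π i = π j) := (Equiv.injective _).eq_iff.symm
  simp only [invMat, Matrix.of_apply, inv_inv, Equiv.Perm.inv_def, Equiv.symm_symm, Equiv.symm_apply_apply]
  simp only [Fin.lt_def, Fin.ext_iff] at *
  split_ifs <;> omega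

/-- The subgroup of `SGEGroup n` where the skew part of the matrix is the inversion
matrix of the permutation. -/
def skewOK (n : ℕ) : Subgroup (SGEGroup n) where
  carrier := {g | ∀ i j, Multiplicative.toAdd g.left i j - Multiplicative.toAdd g.left j i
    = invMat g.right i j}
  one_mem' := by
    intro i j
    simp only [SemidirectProduct.one_left, SemidirectProduct.one_right, toAdd_one,
      Matrix.zero_apply, invMat_one, sub_self]
  mul_mem' := by
    intro a b ha hb i j
    have key : ∀ i j, Multiplicative.toAdd (a * b).left i j
        = Multiplicative.toAdd a.left i j
          + Multiplicative.toAdd b.left (a.right⁻¹ i) (a.right⁻¹ j) := fun _ _ => rfl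
    have hr : (a * b).right = a.right * b.right := rfl
    rw [key, key, hr, invMat_mul]
    have h1 := ha i j
    have h2 := hb (a.right⁻¹ i) (a.right⁻¹ j)
    linarith
  inv_mem' := by
    intro a ha i j
    have key : ∀ i j, Multiplicative.toAdd (a⁻¹).left i j
        = - Multiplicative.toAdd a.left (a.right i) (a.right j) := by
      intro i j
      show Multiplicative.toAdd ((matPermAct n a.right⁻¹) a.left⁻¹) i j = _
      simp [matPermAct, Equiv.Perm.inv_def]; rfl
    have hr : (a⁻¹).right = a.right⁻¹ := rfl
    rw [key, key, hr, invMat_inv]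
    have h1 := ha (a.right j) (a.right i)
    linarith

lemma sgeGen_mem {n : ℕ} (k : Fin (n - 1)) : sgeGen k ∈ skewOK n := by
  intro i j
  have hk := k.isLt
  show Matrix.single (lo k) (hi k) (1 : ℤ) i j
      - Matrix.single (lo k) (hi k) (1 : ℤ) j i
      = invMat (Equiv.swap (lo k) (hi k)) i j
  simp only [invMat, Matrix.single, Matrix.of_apply, Equiv.swap_inv,
    Equiv.swap_apply_def]
  simp only [Fin.lt_def, Fin.ext_iff, apply_ite Fin.val, lo, hi]
  split_ifs <;> omega

open Matrix in
/-- For every braid `β`, writing `SGE(β) = (M, π)`, every entry of `M - Mᵀ` above the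
diagonal lies in `{0, 1}`. -/
theorem SGE_skew_entries_zero_one (n : ℕ) (hn : 2 ≤ n)
    (SGE : BraidGroup n →* SGEGroup n)
    (hSGE : ∀ k : Fin (n - 1), SGE (braidGen k) = sgeGen k)
    (β : BraidGroup n) (i j : Fin n) (hij : i < j) :
    (Multiplicative.toAdd (SGE β).left - (Multiplicative.toAdd (SGE β).left)ᵀ) i j
      ∈ ({0, 1} : Set ℤ) := by
  have hmem : SGE β ∈ skewOK n := by
    have hβ : β ∈ Subgroup.closure
        (Set.range (PresentedGroup.of : Fin (n - 1) → BraidGroup n)) := by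
      rw [PresentedGroup.closure_range_of]; trivial
    refine Subgroup.closure_induction ?_ ?_ ?_ ?_ hβ
    · rintro x ⟨k, rfl⟩
      rw [show (PresentedGroup.of k : BraidGroup n) = braidGen k from rfl, hSGE]
      exact sgeGen_mem k
    · rw [_root_.map_one]; exact (skewOK n).one_mem
    · intro x y _ _ hx hy; rw [_root_.map_mul]; exact mul_mem hx hy
    · intro x _ hx; rw [_root_.map_inv]; exact inv_mem hx
  have h := hmem i j
  simp only [Matrix.sub_apply, Matrix.transpose_apply]
  rw [h]
  simp only [invMat, Matrix.of_apply, Set.mem_insert_iff, Set.mem_singleton_iff]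
  split_ifs with h1 h2
  · right; rfl
  · exact absurd hij h2.1.asymm
  · left; rfl
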